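/- Sharpness of the extremal bound: for 0 < a < b, λ = (b² − a²)/(2ab), and every ε > 0, there exists a nonnegative function v ∈ L²(0,∞) supported in (0, δ) for small δ > 0 with (2/π)∫₀^∞ t v(t)/sqrt((b² − t²)(a² − t²)) dt = 1 and such that for all x ∈ [a,b], (1/π)∫₀^∞ v(t)·(2t/(x² − t²))·(1/sqrt((b² − t²)(a² − t²))) dt·sqrt((b² − x²)(x² − a²)) ≤ λ + ε. -/

import Mathlib

open MeasureTheory

set_option maxHeartbeats 1000000 in
theorem stmt_19 (a b : ℝ) (ha : 0 < a) (hab : a < b) (ε : ℝ) (hε : 0 < ε) :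
    ∃ (δ : ℝ) (v : ℝ → ℝ), 0 < δ ∧ δ < a ∧
      (∀ t, 0 ≤ v t) ∧
      MemLp v 2 (volume.restrict (Set.Ioi (0:ℝ))) ∧
      (∀ t, t ∉ Set.Ioo 0 δ → v t = 0) ∧
      (2 / Real.pi) *
          (∫ t in Set.Ioi (0:ℝ),
            t * v t / Real.sqrt ((b ^ 2 - t ^ 2) * (a ^ 2 - t ^ 2))) = 1 ∧
      ∀ x ∈ Set.Icc a b,
        (1 / Real.pi) *
            (∫ t in Set.Ioi (0:ℝ),
              v t * (2 * t / (x ^ 2 - t ^ 2)) *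
                (1 / Real.sqrt ((b ^ 2 - t ^ 2) * (a ^ 2 - t ^ 2)))) *
          Real.sqrt ((b ^ 2 - x ^ 2) * (x ^ 2 - a ^ 2)) ≤
        (b ^ 2 - a ^ 2) / (2 * a * b) + ε := by
  have hb : 0 < b := ha.trans hab
  -- the constant L
  obtain ⟨L, hLdef⟩ : ∃ L : ℝ, L = (b ^ 2 - a ^ 2) / (2 * a * b) := ⟨_, rfl⟩
  rw [← hLdef]
  have hLpos : 0 < L := by
    rw [hLdef]
    apply div_pos
    · nlinarith
    · positivity
  -- choice of δ
  obtain ⟨δ, hδdef⟩ : ∃ δ : ℝ, δ = (a / 2) * Real.sqrt (ε / (L + ε)) := ⟨_, rfl⟩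
  have hfracpos : 0 < ε / (L + ε) := div_pos hε (by linarith)
  have hfrac1 : ε / (L + ε) < 1 := by
    rw [div_lt_one (by linarith)]; linarith
  have hδpos : 0 < δ := by rw [hδdef]; positivity
  have hδa : δ < a := by
    have h1 : Real.sqrt (ε / (L + ε)) ≤ 1 := by
      rw [show (1:ℝ) = Real.sqrt 1 by simp]
      exact Real.sqrt_le_sqrt hfrac1.le
    rw [hδdef]
    nlinarith [Real.sqrt_nonneg (ε / (L + ε))]
  have hδsq : δ ^ 2 = a ^ 2 / 4 * (ε / (L + ε)) := by
    rw [hδdef, mul_pow, Real.sq_sqrt hfracpos.le]; ring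
  -- key arithmetic inequality
  have hkey : a ^ 2 * L ≤ (L + ε) * (a ^ 2 - δ ^ 2) := by
    have h2 : (L + ε) * δ ^ 2 = ε * a ^ 2 / 4 := by
      rw [hδsq]; field_simp
    nlinarith
  have hδa2 : 0 < a ^ 2 - δ ^ 2 := by nlinarith
  clear hδdef hδsq hfracpos hfrac1
  -- basic positivity on [0, δ]
  have hwpos : ∀ t ∈ Set.Icc (0:ℝ) δ, 0 < (b ^ 2 - t ^ 2) * (a ^ 2 - t ^ 2) := by
    intro t ht
    have h1 := ht.1; have h2 := ht.2
    have hta : t ^ 2 < a ^ 2 := by nlinarith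
    have htb : t ^ 2 < b ^ 2 := by nlinarith
    nlinarith
  have hwspos : ∀ t ∈ Set.Icc (0:ℝ) δ,
      0 < Real.sqrt ((b ^ 2 - t ^ 2) * (a ^ 2 - t ^ 2)) :=
    fun t ht => Real.sqrt_pos.mpr (hwpos t ht)
  -- continuity / integrability of t / sqrt(...) on [0, δ]
  have hcontw : Continuous fun t : ℝ => (b ^ 2 - t ^ 2) * (a ^ 2 - t ^ 2) := by fun_prop
  have hcont : ContinuousOn
      (fun t => t / Real.sqrt ((b ^ 2 - t ^ 2) * (a ^ 2 - t ^ 2))) (Set.Icc 0 δ) := by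
    apply ContinuousOn.div continuousOn_id
    · exact (Real.continuous_sqrt.comp hcontw).continuousOn
    · intro t ht; exact (hwspos t ht).ne'
  have hInt : IntegrableOn
      (fun t => t / Real.sqrt ((b ^ 2 - t ^ 2) * (a ^ 2 - t ^ 2)))
      (Set.Ioo 0 δ) volume :=
    (hcont.integrableOn_Icc).mono_set Set.Ioo_subset_Icc_self
  obtain ⟨I0, hI0def⟩ : ∃ I0 : ℝ,
      I0 = ∫ t in Set.Ioo (0:ℝ) δ, t / Real.sqrt ((b ^ 2 - t ^ 2) * (a ^ 2 - t ^ 2)) :=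
    ⟨_, rfl⟩
  have hI0pos : 0 < I0 := by
    rw [hI0def, setIntegral_pos_iff_support_of_nonneg_ae _ hInt]
    · have hsub : Set.Ioo (0:ℝ) δ ⊆
          Function.support (fun t => t / Real.sqrt ((b ^ 2 - t ^ 2) * (a ^ 2 - t ^ 2)))
            ∩ Set.Ioo 0 δ := by
        intro t ht
        refine ⟨?_, ht⟩
        exact (div_pos ht.1 (hwspos t ⟨ht.1.le, ht.2.le⟩)).ne'
      refine lt_of_lt_of_le ?_ (measure_mono hsub)
      simp [Real.volume_Ioo]
      exact hδpos
    · rw [Filter.EventuallyLE, ae_restrict_iff' measurableSet_Ioo]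
      filter_upwards with t ht
      exact (div_pos ht.1 (hwspos t ⟨ht.1.le, ht.2.le⟩)).le
  obtain ⟨c, hcdef⟩ : ∃ c : ℝ, c = Real.pi / (2 * I0) := ⟨_, rfl⟩
  have hcpos : 0 < c := by rw [hcdef]; exact div_pos Real.pi_pos (by linarith)
  refine ⟨δ, Set.indicator (Set.Ioo 0 δ) (fun _ => c), hδpos, hδa, ?_, ?_, ?_, ?_, ?_⟩
  · intro t
    exact Set.indicator_nonneg (fun _ _ => hcpos.le) t
  · exact (memLp_indicator_const 2 measurableSet_Ioo c
      (Or.inr (by simp [Real.volume_Ioo]))).restrict _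
  · intro t ht
    exact Set.indicator_of_notMem ht _
  · -- normalization
    have hrw : (fun t => t * Set.indicator (Set.Ioo 0 δ) (fun _ => c) t /
          Real.sqrt ((b ^ 2 - t ^ 2) * (a ^ 2 - t ^ 2)))
        = Set.indicator (Set.Ioo 0 δ)
            (fun t => c * (t / Real.sqrt ((b ^ 2 - t ^ 2) * (a ^ 2 - t ^ 2)))) := by
      funext t
      by_cases ht : t ∈ Set.Ioo (0:ℝ) δ
      · rw [Set.indicator_of_mem ht, Set.indicator_of_mem ht]; ring
      · rw [Set.indicator_of_notMem ht, Set.indicator_of_notMem ht]; ring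
    rw [hrw, setIntegral_indicator measurableSet_Ioo,
      Set.inter_eq_self_of_subset_right Set.Ioo_subset_Ioi_self,
      MeasureTheory.integral_const_mul, ← hI0def, hcdef]
    field_simp
  · -- the extremal bound
    intro x hx
    have hax : a ≤ x := hx.1
    have hxb : x ≤ b := hx.2
    have hxpos : 0 < x := lt_of_lt_of_le ha hax
    have hx2 : 0 < x ^ 2 := by positivity
    -- reduce integral to Ioo 0 δ
    have hrw : (fun t => Set.indicator (Set.Ioo 0 δ) (fun _ => c) t *
          (2 * t / (x ^ 2 - t ^ 2)) *
          (1 / Real.sqrt ((b ^ 2 - t ^ 2) * (a ^ 2 - t ^ 2))))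
        = Set.indicator (Set.Ioo 0 δ)
            (fun t => c * (2 * t / (x ^ 2 - t ^ 2)) *
              (1 / Real.sqrt ((b ^ 2 - t ^ 2) * (a ^ 2 - t ^ 2)))) := by
      funext t
      by_cases ht : t ∈ Set.Ioo (0:ℝ) δ
      · rw [Set.indicator_of_mem ht, Set.indicator_of_mem ht]
      · rw [Set.indicator_of_notMem ht, Set.indicator_of_notMem ht]; ring
    rw [hrw, setIntegral_indicator measurableSet_Ioo,
      Set.inter_eq_self_of_subset_right Set.Ioo_subset_Ioi_self]
    -- positivity of x^2 - t^2 on [0, δ]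
    have hxt : ∀ t ∈ Set.Icc (0:ℝ) δ, 0 < x ^ 2 - t ^ 2 := by
      intro t ht
      have h1 := ht.1; have h2 := ht.2
      nlinarith
    -- integrability of the integrand
    have hcontL : ContinuousOn
        (fun t => c * (2 * t / (x ^ 2 - t ^ 2)) *
          (1 / Real.sqrt ((b ^ 2 - t ^ 2) * (a ^ 2 - t ^ 2)))) (Set.Icc 0 δ) := by
      apply ContinuousOn.mul
      · apply ContinuousOn.mul continuousOn_const
        apply ContinuousOn.div (by fun_prop) (by fun_prop)
        intro t ht; exact (hxt t ht).ne'
      · apply ContinuousOn.div continuousOn_const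
          ((Real.continuous_sqrt.comp hcontw).continuousOn)
        intro t ht; exact (hwspos t ht).ne'
    have hIntL : IntegrableOn
        (fun t => c * (2 * t / (x ^ 2 - t ^ 2)) *
          (1 / Real.sqrt ((b ^ 2 - t ^ 2) * (a ^ 2 - t ^ 2)))) (Set.Ioo 0 δ) volume :=
      (hcontL.integrableOn_Icc).mono_set Set.Ioo_subset_Icc_self
    obtain ⟨K, hKdef⟩ : ∃ K : ℝ, K = 2 * a ^ 2 / (x ^ 2 * (a ^ 2 - δ ^ 2)) := ⟨_, rfl⟩
    have hKpos : 0 < K := by rw [hKdef]; positivity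
    -- pointwise bound
    have hptwise : ∀ t ∈ Set.Ioo (0:ℝ) δ,
        c * (2 * t / (x ^ 2 - t ^ 2)) *
            (1 / Real.sqrt ((b ^ 2 - t ^ 2) * (a ^ 2 - t ^ 2)))
          ≤ (c * K) * (t / Real.sqrt ((b ^ 2 - t ^ 2) * (a ^ 2 - t ^ 2))) := by
      intro t ht
      have ht1 := ht.1; have ht2 := ht.2
      have hxt' : 0 < x ^ 2 - t ^ 2 := hxt t ⟨ht1.le, ht2.le⟩
      have hwp : 0 < Real.sqrt ((b ^ 2 - t ^ 2) * (a ^ 2 - t ^ 2)) :=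
        hwspos t ⟨ht1.le, ht2.le⟩
      have h1 : 2 * t / (x ^ 2 - t ^ 2) ≤ K * t := by
        rw [div_le_iff₀ hxt', hKdef, div_mul_eq_mul_div, div_mul_eq_mul_div,
          le_div_iff₀ (by positivity)]
        have h2 : t ^ 2 ≤ δ ^ 2 := pow_le_pow_left₀ ht1.le ht2.le 2
        have h3 : a ^ 2 ≤ x ^ 2 := pow_le_pow_left₀ ha.le hax 2
        have hts : a ^ 2 * t ^ 2 ≤ x ^ 2 * δ ^ 2 :=
          le_trans (mul_le_mul_of_nonneg_left h2 (by positivity))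
            (mul_le_mul_of_nonneg_right h3 (by positivity))
        nlinarith [mul_le_mul_of_nonneg_left hts (by linarith : (0:ℝ) ≤ 2 * t)]
      calc c * (2 * t / (x ^ 2 - t ^ 2)) *
            (1 / Real.sqrt ((b ^ 2 - t ^ 2) * (a ^ 2 - t ^ 2)))
          ≤ c * (K * t) * (1 / Real.sqrt ((b ^ 2 - t ^ 2) * (a ^ 2 - t ^ 2))) := by
            apply mul_le_mul_of_nonneg_right (mul_le_mul_of_nonneg_left h1 hcpos.le)
            positivity
        _ = (c * K) * (t / Real.sqrt ((b ^ 2 - t ^ 2) * (a ^ 2 - t ^ 2))) := by ring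
    have hmono : (∫ t in Set.Ioo (0:ℝ) δ,
          c * (2 * t / (x ^ 2 - t ^ 2)) *
            (1 / Real.sqrt ((b ^ 2 - t ^ 2) * (a ^ 2 - t ^ 2))))
        ≤ (c * K) * I0 := by
      rw [hI0def, ← MeasureTheory.integral_const_mul]
      exact setIntegral_mono_on hIntL (hInt.const_mul _) measurableSet_Ioo hptwise
    have hcI : c * K * I0 = Real.pi * K / 2 := by
      rw [hcdef]; field_simp
    rw [hcI] at hmono
    -- sqrt bound: sqrt((b²-x²)(x²-a²)) ≤ L x²
    have hS : Real.sqrt ((b ^ 2 - x ^ 2) * (x ^ 2 - a ^ 2)) ≤ L * x ^ 2 := by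
      have h1 : (b ^ 2 - x ^ 2) * (x ^ 2 - a ^ 2) ≤ (L * x ^ 2) ^ 2 := by
        rw [hLdef, div_mul_eq_mul_div, div_pow, le_div_iff₀ (by positivity)]
        nlinarith [sq_nonneg (a ^ 2 * (b ^ 2 - x ^ 2) - b ^ 2 * (x ^ 2 - a ^ 2))]
      calc Real.sqrt ((b ^ 2 - x ^ 2) * (x ^ 2 - a ^ 2))
          ≤ Real.sqrt ((L * x ^ 2) ^ 2) := Real.sqrt_le_sqrt h1
        _ = L * x ^ 2 := Real.sqrt_sq (by positivity)
    have hSnn : 0 ≤ Real.sqrt ((b ^ 2 - x ^ 2) * (x ^ 2 - a ^ 2)) := Real.sqrt_nonneg _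
    calc (1 / Real.pi) *
            (∫ t in Set.Ioo (0:ℝ) δ,
              c * (2 * t / (x ^ 2 - t ^ 2)) *
                (1 / Real.sqrt ((b ^ 2 - t ^ 2) * (a ^ 2 - t ^ 2)))) *
          Real.sqrt ((b ^ 2 - x ^ 2) * (x ^ 2 - a ^ 2))
        ≤ (1 / Real.pi) * (Real.pi * K / 2) *
            Real.sqrt ((b ^ 2 - x ^ 2) * (x ^ 2 - a ^ 2)) := by
          apply mul_le_mul_of_nonneg_right _ hSnn
          exact mul_le_mul_of_nonneg_left hmono (by positivity)
      _ = (K / 2) * Real.sqrt ((b ^ 2 - x ^ 2) * (x ^ 2 - a ^ 2)) := by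
          field_simp
      _ ≤ (K / 2) * (L * x ^ 2) := mul_le_mul_of_nonneg_left hS (by positivity)
      _ = a ^ 2 * L / (a ^ 2 - δ ^ 2) := by
          rw [hKdef]; field_simp
      _ ≤ L + ε := by
          rw [div_le_iff₀ hδa2]; linarith [hkey]
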